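/- If K is a compact Hausdorff space such that C(K) is lattice embeddable into C[0,1], then K is a finite disjoint union of Peano compacta (continuous images of [0,1]). Conversely, if K is a finite disjoint union of Peano compacta then C(K) is lattice embeddable into C[0,1]. -/

import Mathlib

/-- A subset `A` of a topological space is a Peano compactum if it is the range of a
continuous map from `[0,1]`. -/
def IsPeanoSubset {K : Type*} [TopologicalSpace K] (A : Set K) : Prop :=
  ∃ f : unitInterval → K, Continuous f ∧ Set.range f = A

open Set unitInterval

noncomputable section

/-- affine segment map on the unit interval from `a` to `b`. -/
def segMap (a b : unitInterval) : unitInterval → unitInterval := fun t =>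
  ⟨(1 - t.1) * a.1 + t.1 * b.1, by
    constructor
    · have := t.2.1; have := t.2.2
      have := a.2.1; have := b.2.1
      have h1 : 0 ≤ (1 - t.1) * a.1 := by nlinarith
      have h2 : 0 ≤ t.1 * b.1 := by nlinarith
      linarith
    · have h1 : (1 - t.1) * a.1 ≤ (1 - t.1) * 1 := by
        apply mul_le_mul_of_nonneg_left a.2.2; linarith [t.2.2]
      have h2 : t.1 * b.1 ≤ t.1 * 1 := mul_le_mul_of_nonneg_left b.2.2 t.2.1
      linarith⟩

lemma segMap_continuous (a b : unitInterval) : Continuous (segMap a b) := by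
  apply Continuous.subtype_mk
  fun_prop

@[simp] lemma segMap_zero (a b : unitInterval) : segMap a b 0 = a := by
  apply Subtype.ext; simp [segMap]

@[simp] lemma segMap_one (a b : unitInterval) : segMap a b 1 = b := by
  apply Subtype.ext; simp [segMap]

lemma segMap_self_id (t : unitInterval) : segMap 0 1 t = t := by
  apply Subtype.ext; simp [segMap]

lemma segMap_mem_Icc {a b : unitInterval} (hab : a ≤ b) (t : unitInterval) :
    segMap a b t ∈ Icc a b := by
  have ht0 := t.2.1; have ht1 := t.2.2
  have hab' : a.1 ≤ b.1 := hab
  constructor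
  · show a.1 ≤ (1 - t.1) * a.1 + t.1 * b.1
    nlinarith
  · show (1 - t.1) * a.1 + t.1 * b.1 ≤ b.1
    nlinarith

lemma segMap_surj_Icc {a b : unitInterval} (hab : a ≤ b) :
    Set.range (segMap a b) = Icc a b := by
  apply subset_antisymm
  · rintro _ ⟨t, rfl⟩; exact segMap_mem_Icc hab t
  · rintro y ⟨hy1, hy2⟩
    have hab' : a.1 ≤ b.1 := hab
    rcases eq_or_lt_of_le hab' with h | h
    · refine ⟨0, ?_⟩
      apply Subtype.ext
      have : a.1 ≤ y.1 := hy1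
      have : y.1 ≤ b.1 := hy2
      show (1 - (0:unitInterval).1) * a.1 + (0:unitInterval).1 * b.1 = y.1
      simp; linarith
    · have hy1' : a.1 ≤ y.1 := hy1
      have hy2' : y.1 ≤ b.1 := hy2
      refine ⟨⟨(y.1 - a.1) / (b.1 - a.1), ?_, ?_⟩, ?_⟩
      · apply div_nonneg <;> linarith
      · rw [div_le_one (by linarith)]; linarith
      · apply Subtype.ext
        show (1 - (y.1 - a.1) / (b.1 - a.1)) * a.1 + (y.1 - a.1) / (b.1 - a.1) * b.1 = y.1
        have hne : b.1 - a.1 ≠ 0 := by linarith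
        field_simp
        ring

end

namespace PeanoAux

variable {K : Type*} [TopologicalSpace K]

/-- from a continuous `f : I → K`, a path from `f a` to `f b` whose range sits in `range f`. -/
noncomputable def pathSeg (f : unitInterval → K) (hf : Continuous f) (a b : unitInterval) :
    Path (f a) (f b) where
  toFun := f ∘ segMap a b
  continuous_toFun := hf.comp (segMap_continuous a b)
  source' := by simp
  target' := by simp

lemma pathSeg_range_subset (f : unitInterval → K) (hf : Continuous f) (a b : unitInterval) :
    Set.range (pathSeg f hf a b) ⊆ Set.range f := by
  rintro _ ⟨t, rfl⟩; exact ⟨segMap a b t, rfl⟩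

lemma pathSeg_range_full (f : unitInterval → K) (hf : Continuous f) :
    Set.range (pathSeg f hf 0 1) = Set.range f := by
  have : (pathSeg f hf 0 1 : unitInterval → K) = f := by
    funext t; show f (segMap 0 1 t) = f t; rw [segMap_self_id]
  rw [this]

/-- a loop at any point of a Peano set whose range is the whole set. -/
lemma exists_loop {A : Set K} (hA : IsPeanoSubset A) {p : K} (hp : p ∈ A) :
    ∃ γ : Path p p, Set.range γ = A := by
  obtain ⟨f, hf, rfl⟩ := hA
  obtain ⟨s, rfl⟩ := hp
  refine ⟨(pathSeg f hf s 0).trans ((pathSeg f hf 0 1).trans (pathSeg f hf 1 s)), ?_⟩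
  rw [Path.trans_range, Path.trans_range, pathSeg_range_full]
  apply subset_antisymm
  · apply union_subset (pathSeg_range_subset _ _ _ _)
    apply union_subset subset_rfl (pathSeg_range_subset _ _ _ _)
  · intro x hx; exact Or.inr (Or.inl hx)

lemma nonempty_of_isPeano {A : Set K} (hA : IsPeanoSubset A) : A.Nonempty := by
  obtain ⟨f, hf, rfl⟩ := hA
  exact ⟨f 0, 0, rfl⟩

lemma isPeano_union {A B : Set K} (hA : IsPeanoSubset A) (hB : IsPeanoSubset B)
    (hAB : (A ∩ B).Nonempty) : IsPeanoSubset (A ∪ B) := by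
  obtain ⟨p, hpA, hpB⟩ := hAB
  obtain ⟨γ, hγ⟩ := exists_loop hA hpA
  obtain ⟨δ, hδ⟩ := exists_loop hB hpB
  exact ⟨(γ.trans δ : unitInterval → K), (γ.trans δ).continuous,
    by rw [Path.trans_range, hγ, hδ]⟩

end PeanoAux
-- merging lemmas, appended to full.lean
namespace PeanoAux
open Classical in
lemma isPeano_union_finset {K : Type*} [TopologicalSpace K] (t : Finset (Set K)) :
    ∀ A : Set K, IsPeanoSubset A → (∀ B ∈ t, IsPeanoSubset B ∧ (B ∩ A).Nonempty) →
    IsPeanoSubset (A ∪ ⋃₀ ↑t) := by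
  classical
  induction t using Finset.induction_on with
  | empty => intro A hA _; simpa using hA
  | @insert B t' _ ih =>
    intro A hA h
    have hBA : IsPeanoSubset (A ∪ B) :=
      isPeano_union hA (h B (Finset.mem_insert_self _ _)).1
        (by
          obtain ⟨x, hx1, hx2⟩ := (h B (Finset.mem_insert_self _ _)).2
          exact ⟨x, hx2, hx1⟩)
    have := ih (A ∪ B) hBA (fun B' hB' => by
      refine ⟨(h B' (Finset.mem_insert_of_mem hB')).1, ?_⟩
      obtain ⟨x, hx1, hx2⟩ := (h B' (Finset.mem_insert_of_mem hB')).2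
      exact ⟨x, hx1, Or.inl hx2⟩)
    have heq : (A ∪ B) ∪ ⋃₀ ↑t' = A ∪ ⋃₀ ↑(insert B t') := by
      rw [Finset.coe_insert, Set.sUnion_insert]
      rw [Set.union_assoc]
    rwa [heq] at this

open Classical in
/-- any finite family of Peano sets can be merged into a disjoint finite family with
the same union. -/
lemma merge {K : Type*} [TopologicalSpace K] (s : Finset (Set K)) :
    (∀ A ∈ s, IsPeanoSubset A) →
    ∃ t : Finset (Set K), (∀ B ∈ t, IsPeanoSubset B) ∧ (⋃₀ ↑t = ⋃₀ (s : Set (Set K))) ∧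
      (∀ B ∈ t, ∀ B' ∈ t, B ≠ B' → Disjoint B B') := by
  classical
  induction s using Finset.induction_on with
  | empty => intro _; exact ⟨∅, by simp, by simp, by simp⟩
  | @insert A s' _ ih =>
    intro h
    obtain ⟨t, ht1, ht2, ht3⟩ := ih (fun B hB => h B (Finset.mem_insert_of_mem hB))
    have hAp : IsPeanoSubset A := h A (Finset.mem_insert_self _ _)
    set tm : Finset (Set K) := t.filter (fun B => (B ∩ A).Nonempty) with htm
    set td : Finset (Set K) := t.filter (fun B => ¬(B ∩ A).Nonempty) with htd
    set C : Set K := A ∪ ⋃₀ ↑tm with hC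
    have hCp : IsPeanoSubset C :=
      isPeano_union_finset tm A hAp (fun B hB => by
        rw [htm, Finset.mem_filter] at hB
        exact ⟨ht1 B hB.1, hB.2⟩)
    have hCne : C.Nonempty := nonempty_of_isPeano hCp
    have hCA : (C ∩ A).Nonempty := by
      obtain ⟨x, hx⟩ := nonempty_of_isPeano hAp
      exact ⟨x, Or.inl hx, hx⟩
    have hCnotmem : C ∉ td := by
      intro hmem
      rw [htd, Finset.mem_filter] at hmem
      obtain ⟨x, hx1, hx2⟩ := hCA
      exact hmem.2 ⟨x, hx1, hx2⟩
    refine ⟨insert C td, ?_, ?_, ?_⟩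
    · intro B hB
      rcases Finset.mem_insert.mp hB with rfl | hB
      · exact hCp
      · exact ht1 B (Finset.mem_filter.mp hB).1
    · rw [Finset.coe_insert, Set.sUnion_insert, Finset.coe_insert, Set.sUnion_insert, ← ht2]
      have hsplit : (t : Set (Set K)) = ↑tm ∪ ↑td := by
        rw [htm, htd]
        ext B; simp only [Set.mem_union, Finset.coe_filter, Set.mem_setOf_eq, Finset.mem_coe]
        tauto
      rw [hsplit, Set.sUnion_union, hC, Set.union_assoc]
    · have hdisj_td_A : ∀ B ∈ td, Disjoint B C := by
        intro B hB
        rw [htd, Finset.mem_filter] at hB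
        rw [Set.disjoint_right]
        rintro x (hxA | hxU) hxB
        · exact hB.2 ⟨x, hxB, hxA⟩
        · obtain ⟨D, hD, hxD⟩ := hxU
          have hDt : D ∈ tm := hD
          rw [htm, Finset.mem_filter] at hDt
          have hDB : D ≠ B := by
            rintro rfl
            exact hB.2 hDt.2
          exact (Set.disjoint_left.mp (ht3 D hDt.1 B hB.1 hDB)) hxD hxB
      intro B hB B' hB' hne
      rcases Finset.mem_insert.mp hB with rfl | hB
      · rcases Finset.mem_insert.mp hB' with rfl | hB'
        · exact absurd rfl hne
        · exact (hdisj_td_A B' hB').symm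
      · rcases Finset.mem_insert.mp hB' with rfl | hB'
        · exact hdisj_td_A B hB
        · exact ht3 B (Finset.mem_filter.mp hB).1 B' (Finset.mem_filter.mp hB').1 hne
end PeanoAux
namespace PeanoAux
open Set

section Backward
variable {n : ℕ}

/-- tent function for the `i`-th block. -/
noncomputable def tent (n : ℕ) (i : Fin n) : C(unitInterval, ℝ) :=
  ⟨fun t => max 0 (min 1 (min (3*((n:ℝ)*t.1 - (i:ℕ))) (3*(((i:ℕ):ℝ)+1 - (n:ℝ)*t.1)))), by
    fun_prop⟩

lemma tent_nonneg (i : Fin n) (t : unitInterval) : 0 ≤ tent n i t := le_max_left _ _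

lemma tent_le_one (i : Fin n) (t : unitInterval) : tent n i t ≤ 1 := by
  apply max_le zero_le_one (min_le_left _ _)

lemma tent_pos_iff {i : Fin n} {t : unitInterval} (h : tent n i t ≠ 0) :
    ((i:ℕ):ℝ) < (n:ℝ)*t.1 ∧ (n:ℝ)*t.1 < ((i:ℕ):ℝ) + 1 := by
  have hpos : 0 < min 1 (min (3*((n:ℝ)*t.1 - (i:ℕ))) (3*(((i:ℕ):ℝ)+1 - (n:ℝ)*t.1))) := by
    by_contra hle
    push_neg at hle
    exact h (max_eq_left hle)
  have h1 := lt_of_lt_of_le hpos (min_le_right _ _)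
  have h2 := lt_of_lt_of_le h1 (min_le_left _ _)
  have h3 := lt_of_lt_of_le h1 (min_le_right _ _)
  constructor <;> nlinarith

lemma tent_eq_zero_of_ne {i j : Fin n} (hij : i ≠ j) (t : unitInterval) :
    tent n i t = 0 ∨ tent n j t = 0 := by
  by_contra h
  push_neg at h
  obtain ⟨hi1, hi2⟩ := tent_pos_iff h.1
  obtain ⟨hj1, hj2⟩ := tent_pos_iff h.2
  apply hij
  have h1 : ((i:ℕ):ℝ) < ((j:ℕ):ℝ) + 1 := lt_trans hi1 hj2
  have h2 : ((j:ℕ):ℝ) < ((i:ℕ):ℝ) + 1 := lt_trans hj1 hi2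
  have h1' : (i:ℕ) < (j:ℕ) + 1 := by exact_mod_cast h1
  have h2' : (j:ℕ) < (i:ℕ) + 1 := by exact_mod_cast h2
  apply Fin.ext
  omega

/-- reparametrisation of the middle third of the `i`-th block. -/
noncomputable def blockParam (n : ℕ) (i : Fin n) : unitInterval → unitInterval := fun t =>
  ⟨max 0 (min 1 (3*((n:ℝ)*t.1 - (i:ℕ)) - 1)), by
    constructor
    · exact le_max_left _ _
    · apply max_le zero_le_one (min_le_left _ _)⟩

lemma blockParam_continuous (n : ℕ) (i : Fin n) : Continuous (blockParam n i) := by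
  apply Continuous.subtype_mk
  fun_prop

/-- special point in the middle third of the `i`-th block hitting parameter `s`. -/
noncomputable def blockPt (n : ℕ) (i : Fin n) (s : unitInterval) : unitInterval :=
  ⟨(((i:ℕ):ℝ) + (1+s.1)/3)/(n:ℝ), by
    have hn : 0 < (n:ℝ) := by exact_mod_cast i.pos
    have hs0 := s.2.1; have hs1 := s.2.2
    have hin : ((i:ℕ):ℝ) + 1 ≤ (n:ℝ) := by
      have := i.2
      exact_mod_cast Nat.succ_le_of_lt this
    constructor
    · apply div_nonneg _ (le_of_lt hn)
      positivity
    · rw [div_le_one hn]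
      nlinarith⟩

lemma blockPt_spec (n : ℕ) (i : Fin n) (s : unitInterval) :
    tent n i (blockPt n i s) = 1 ∧ blockParam n i (blockPt n i s) = s := by
  have hn : 0 < (n:ℝ) := by exact_mod_cast i.pos
  have hs0 := s.2.1; have hs1 := s.2.2
  have key : (n:ℝ) * (blockPt n i s).1 - (i:ℕ) = (1+s.1)/3 := by
    show (n:ℝ) * ((((i:ℕ):ℝ) + (1+s.1)/3)/(n:ℝ)) - (i:ℕ) = (1+s.1)/3
    field_simp
    ring
  constructor
  · show max 0 (min 1 (min (3*((n:ℝ)*(blockPt n i s).1 - (i:ℕ)))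
      (3*(((i:ℕ):ℝ)+1 - (n:ℝ)*(blockPt n i s).1)))) = 1
    have key2 : (3:ℝ)*(((i:ℕ):ℝ)+1 - (n:ℝ)*(blockPt n i s).1) = 2 - s.1 := by
      have : ((i:ℕ):ℝ)+1 - (n:ℝ)*(blockPt n i s).1 = 1 - ((n:ℝ)*(blockPt n i s).1 - (i:ℕ)) := by
        ring
      rw [this, key]; ring
    rw [key, key2]
    have : (3:ℝ) * ((1+s.1)/3) = 1 + s.1 := by ring
    rw [this]
    rw [min_eq_left (le_min (by linarith) (by linarith)), max_eq_right zero_le_one]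
  · apply Subtype.ext
    show max 0 (min 1 (3*((n:ℝ)*(blockPt n i s).1 - (i:ℕ)) - 1)) = s.1
    rw [key]
    have : (3:ℝ) * ((1+s.1)/3) - 1 = s.1 := by ring
    rw [this, min_eq_right hs1, max_eq_right hs0]

end Backward
end PeanoAux
namespace PeanoAux
open Set

variable {K : Type} [TopologicalSpace K] [CompactSpace K] [T2Space K]

lemma backward_direction {n : ℕ} {A : Fin n → Set K}
    (hcov : Set.univ = ⋃ i, A i) (hP : ∀ i, IsPeanoSubset (A i)) :
    ∃ T : C(K, ℝ) →L[ℝ] C(unitInterval, ℝ),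
      (∀ f g : C(K, ℝ), T (f ⊔ g) = T f ⊔ T g) ∧
      (∃ c : ℝ, 0 < c ∧ ∀ f : C(K, ℝ), c * ‖f‖ ≤ ‖T f‖) := by
  classical
  choose g hgc hgr using hP
  -- the block maps
  set G : Fin n → C(unitInterval, K) :=
    fun i => ⟨g i ∘ blockParam n i, (hgc i).comp (blockParam_continuous n i)⟩ with hG
  set Tfun : C(K, ℝ) → C(unitInterval, ℝ) :=
    fun f => ∑ i : Fin n, tent n i * (f.comp (G i)) with hTfun
  have Tfun_apply : ∀ f t, Tfun f t = ∑ i : Fin n, tent n i t * f ((G i) t) := by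
    intro f t
    rw [hTfun]
    simp [ContinuousMap.sum_apply]
  -- single-term evaluation
  have eval_single : ∀ (f : C(K, ℝ)) (t : unitInterval) (k : Fin n), tent n k t ≠ 0 →
      Tfun f t = tent n k t * f ((G k) t) := by
    intro f t k hk
    rw [Tfun_apply]
    apply Finset.sum_eq_single
    · intro j _ hjk
      rcases tent_eq_zero_of_ne hjk t with h | h
      · rw [h, zero_mul]
      · exact absurd h hk
    · intro h; exact absurd (Finset.mem_univ k) h
  have eval_zero : ∀ (f : C(K, ℝ)) (t : unitInterval), (∀ i, tent n i t = 0) →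
      Tfun f t = 0 := by
    intro f t h
    rw [Tfun_apply]
    apply Finset.sum_eq_zero
    intro i _
    rw [h i, zero_mul]
  -- pointwise bound
  have bound : ∀ (f : C(K, ℝ)) (t : unitInterval), |Tfun f t| ≤ ‖f‖ := by
    intro f t
    by_cases h : ∀ i, tent n i t = 0
    · rw [eval_zero f t h]; simpa using norm_nonneg f
    · push_neg at h
      obtain ⟨k, hk⟩ := h
      rw [eval_single f t k hk, abs_mul, abs_of_nonneg (tent_nonneg k t)]
      calc tent n k t * |f ((G k) t)| ≤ 1 * ‖f‖ := by
            apply mul_le_mul (tent_le_one k t) _ (abs_nonneg _) zero_le_one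
            exact (ContinuousMap.norm_coe_le_norm f _)
        _ = ‖f‖ := one_mul _
  -- the linear map
  set Tlin : C(K, ℝ) →ₗ[ℝ] C(unitInterval, ℝ) :=
    { toFun := Tfun
      map_add' := by
        intro f g'
        ext t
        rw [ContinuousMap.add_apply, Tfun_apply, Tfun_apply, Tfun_apply,
          ← Finset.sum_add_distrib]
        apply Finset.sum_congr rfl
        intro i _
        simp [mul_add]
      map_smul' := by
        intro c f
        ext t
        rw [ContinuousMap.smul_apply, Tfun_apply, Tfun_apply, Finset.smul_sum]
        apply Finset.sum_congr rfl
        intro i _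
        simp
        ring } with hTlin
  set T : C(K, ℝ) →L[ℝ] C(unitInterval, ℝ) :=
    Tlin.mkContinuous 1 (by
      intro f
      rw [one_mul]
      rw [ContinuousMap.norm_le _ (norm_nonneg f)]
      intro t
      exact bound f t) with hT
  have hTapp : ∀ f, T f = Tfun f := fun f => rfl
  refine ⟨T, ?_, 1, one_pos, ?_⟩
  · intro f g'
    ext t
    rw [ContinuousMap.sup_apply, hTapp, hTapp, hTapp]
    by_cases h : ∀ i, tent n i t = 0
    · rw [eval_zero _ t h, eval_zero _ t h, eval_zero _ t h]
      simp
    · push_neg at h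
      obtain ⟨k, hk⟩ := h
      rw [eval_single _ t k hk, eval_single _ t k hk, eval_single _ t k hk]
      rw [ContinuousMap.sup_apply]
      rcases le_total (f ((G k) t)) (g' ((G k) t)) with hle | hle
      · rw [sup_eq_right.mpr hle, sup_eq_right.mpr
          (mul_le_mul_of_nonneg_left hle (tent_nonneg k t))]
      · rw [sup_eq_left.mpr hle, sup_eq_left.mpr
          (mul_le_mul_of_nonneg_left hle (tent_nonneg k t))]
  · intro f
    rw [one_mul, ContinuousMap.norm_le _ (norm_nonneg (T f))]
    intro x
    have hx : x ∈ ⋃ i, A i := by rw [← hcov]; trivial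
    obtain ⟨k, hk⟩ := Set.mem_iUnion.mp hx
    rw [← hgr k] at hk
    obtain ⟨s, rfl⟩ := hk
    obtain ⟨h1, h2⟩ := blockPt_spec n k s
    have : Tfun f (blockPt n k s) = f (g k s) := by
      rw [eval_single f _ k (by rw [h1]; norm_num)]
      rw [h1, one_mul]
      congr 1
      show g k (blockParam n k (blockPt n k s)) = g k s
      rw [h2]
    calc ‖f (g k s)‖ = ‖Tfun f (blockPt n k s)‖ := by rw [this]
      _ = ‖(T f) (blockPt n k s)‖ := by rw [hTapp]
      _ ≤ ‖T f‖ := ContinuousMap.norm_coe_le_norm _ _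

end PeanoAux
namespace PeanoAux
open Set

section Forward
variable {K : Type} [TopologicalSpace K] [CompactSpace K] [T2Space K]
variable (T : C(K, ℝ) →L[ℝ] C(unitInterval, ℝ))
variable (hsup : ∀ f g : C(K, ℝ), T (f ⊔ g) = T f ⊔ T g)

include hsup

lemma T_pos {f : C(K, ℝ)} (hf : 0 ≤ f) : 0 ≤ T f := by
  have h := hsup f 0
  rw [sup_eq_left.mpr hf, map_zero] at h
  rw [h]
  exact le_sup_right

lemma T_mono {f g : C(K, ℝ)} (h : f ≤ g) : T f ≤ T g := by
  have := T_pos T hsup (sub_nonneg.mpr h)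
  rw [map_sub] at this
  exact sub_nonneg.mp this

lemma T_inf (f g : C(K, ℝ)) : T (f ⊓ g) = T f ⊓ T g := by
  have h1 : f ⊓ g = -((-f) ⊔ (-g)) := by rw [neg_sup, neg_neg, neg_neg]
  rw [h1, map_neg, hsup, neg_sup, map_neg, map_neg, neg_neg, neg_neg]

lemma key_bound (f : C(K, ℝ)) (t : unitInterval) :
    |T f t| ≤ ‖f‖ * (T 1) t := by
  have h1 : f ≤ f ⊔ (-f) := le_sup_left
  have h2 : -f ≤ f ⊔ (-f) := le_sup_right
  have h3 : f ⊔ (-f) ≤ ‖f‖ • (1 : C(K, ℝ)) := by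
    rw [ContinuousMap.le_def]
    intro x
    rw [ContinuousMap.sup_apply]
    simp only [ContinuousMap.smul_apply, ContinuousMap.one_apply, smul_eq_mul, mul_one]
    apply max_le
    · exact le_trans (le_abs_self _) (ContinuousMap.norm_coe_le_norm f x)
    · rw [ContinuousMap.neg_apply]
      exact le_trans (neg_le_abs _) (ContinuousMap.norm_coe_le_norm f x)
  have hb : T (f ⊔ (-f)) t ≤ ‖f‖ * (T 1) t := by
    have := ContinuousMap.le_def.mp (T_mono T hsup h3) t
    rwa [map_smul, ContinuousMap.smul_apply, smul_eq_mul] at this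
  apply abs_le.mpr
  constructor
  · have := ContinuousMap.le_def.mp (T_mono T hsup h2) t
    rw [map_neg, ContinuousMap.neg_apply] at this
    linarith
  · exact le_trans (ContinuousMap.le_def.mp (T_mono T hsup h1) t) hb

lemma w_nonneg (t : unitInterval) : 0 ≤ (T 1) t := by
  have : (0 : C(K,ℝ)) ≤ (1 : C(K,ℝ)) := by
    rw [ContinuousMap.le_def]; intro x; simp
  exact ContinuousMap.le_def.mp (T_pos T hsup this) t

/-- pointwise representation: at a point where `T 1` is positive, `f ↦ T f t`
is a weighted point evaluation. -/
lemma exists_pt [Nonempty K] (t : unitInterval) (ht : 0 < (T 1) t) :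
    ∃ x : K, ∀ f : C(K, ℝ), T f t = (T 1) t * f x := by
  classical
  -- Step (a): the "support" set S is nonempty
  set S : Set K := {x | ∀ f : C(K, ℝ), 0 ≤ f → T f t = 0 → f x = 0} with hS
  have hSne : S.Nonempty := by
    by_contra hSe
    rw [Set.not_nonempty_iff_eq_empty] at hSe
    have : ∀ x : K, ∃ f : C(K, ℝ), 0 ≤ f ∧ T f t = 0 ∧ f x ≠ 0 := by
      intro x
      have : x ∉ S := by rw [hSe]; exact Set.notMem_empty x
      rw [hS, Set.mem_setOf_eq] at this
      push_neg at this
      exact this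
    choose F hF1 hF2 hF3 using this
    have hcov : (Set.univ : Set K) ⊆ ⋃ x, {y | 0 < F x y} := by
      intro y _
      rw [Set.mem_iUnion]
      exact ⟨y, lt_of_le_of_ne (ContinuousMap.le_def.mp (hF1 y) y) (Ne.symm (hF3 y))⟩
    obtain ⟨s, hs⟩ := isCompact_univ.elim_finite_subcover _
      (fun x => isOpen_lt continuous_const (F x).continuous) hcov
    set gsum : C(K, ℝ) := ∑ x ∈ s, F x with hgsum
    have hgpos : ∀ y, 0 < gsum y := by
      intro y
      obtain ⟨x, hx⟩ := Set.mem_iUnion₂.mp (hs (Set.mem_univ y))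
      rw [hgsum, ContinuousMap.sum_apply]
      apply Finset.sum_pos'
      · intro i _; exact ContinuousMap.le_def.mp (hF1 i) y
      · exact ⟨x, hx.1, hx.2⟩
    have hTg : T gsum t = 0 := by
      rw [hgsum, map_sum, ContinuousMap.sum_apply]
      apply Finset.sum_eq_zero
      intro x _
      exact hF2 x
    obtain ⟨y0, _, hy0⟩ := isCompact_univ.exists_isMinOn Set.univ_nonempty
      gsum.continuous.continuousOn
    set ε := gsum y0 with hε
    have hεpos : 0 < ε := hgpos y0
    have hle : ε • (1 : C(K, ℝ)) ≤ gsum := by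
      rw [ContinuousMap.le_def]
      intro y
      simpa using hy0 (Set.mem_univ y)
    have := ContinuousMap.le_def.mp (T_mono T hsup hle) t
    rw [map_smul, ContinuousMap.smul_apply, smul_eq_mul, hTg] at this
    nlinarith
  obtain ⟨x₀, hx₀⟩ := hSne
  rw [hS, Set.mem_setOf_eq] at hx₀
  -- Step (b1): functions vanishing near x₀ are killed
  have hvanish : ∀ u : C(K, ℝ), 0 ≤ u → ∀ V : Set K, IsOpen V → x₀ ∈ V →
      (∀ y ∈ V, u y = 0) → T u t = 0 := by
    intro u hu V hV hx₀V huV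
    by_contra hne
    have hupos : 0 < T u t :=
      lt_of_le_of_ne (ContinuousMap.le_def.mp (T_pos T hsup hu) t) (Ne.symm hne)
    obtain ⟨v, hv0, hv1, hv01⟩ := exists_continuous_zero_one_of_isClosed
      (isClosed_compl_iff.mpr hV) (isClosed_singleton (x := x₀))
      (by rw [Set.disjoint_left]; intro y hy hy'; rw [Set.mem_singleton_iff] at hy'; subst hy'; exact hy hx₀V)
    have hvnn : (0 : C(K,ℝ)) ≤ v := by
      rw [ContinuousMap.le_def]; intro y; exact (hv01 y).1
    have hinf : ∀ lam : ℝ, 0 ≤ lam → u ⊓ (lam • v) = 0 := by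
      intro lam hlam
      ext y
      rw [ContinuousMap.inf_apply, ContinuousMap.smul_apply, ContinuousMap.zero_apply,
        smul_eq_mul]
      by_cases hy : y ∈ V
      · rw [huV y hy]
        apply min_eq_left
        apply mul_nonneg hlam ((hv01 y).1)
      · have : v y = 0 := hv0 hy
        rw [this, mul_zero]
        apply min_eq_right
        exact ContinuousMap.le_def.mp hu y
    have hTv0 : T v t = 0 := by
      by_contra hTv
      have hTvpos : 0 < T v t :=
        lt_of_le_of_ne (ContinuousMap.le_def.mp (T_pos T hsup hvnn) t) (Ne.symm hTv)
      set lam : ℝ := T u t / T v t + 1 with hlam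
      have hlamnn : 0 ≤ lam := by positivity
      have h0 := hinf lam hlamnn
      have := congrArg (fun f => T f t) h0
      simp only [map_zero, ContinuousMap.zero_apply] at this
      rw [T_inf T hsup, ContinuousMap.inf_apply, map_smul, ContinuousMap.smul_apply,
        smul_eq_mul] at this
      have hlamv : T u t < lam * T v t := by
        rw [hlam]
        rw [add_mul, one_mul, div_mul_cancel₀ _ (ne_of_gt hTvpos)]
        linarith
      rw [min_eq_left (le_of_lt hlamv)] at this
      linarith
    have := hx₀ v hvnn hTv0
    rw [hv1 rfl] at this
    norm_num at this
  -- Step (b2): nonneg functions vanishing at x₀ are killed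
  have hzero : ∀ h : C(K, ℝ), 0 ≤ h → h x₀ = 0 → T h t = 0 := by
    intro h hh hhx₀
    have hnn : 0 ≤ T h t := ContinuousMap.le_def.mp (T_pos T hsup hh) t
    have hkey : ∀ ε : ℝ, 0 < ε → T h t ≤ ε * (T 1) t := by
      intro ε hε
      set u : C(K, ℝ) := (h - ContinuousMap.const K ε) ⊔ 0 with hu
      have hunn : (0:C(K,ℝ)) ≤ u := le_sup_right
      have huV : ∀ y ∈ {y | h y < ε}, u y = 0 := by
        intro y hy
        rw [hu, ContinuousMap.sup_apply, ContinuousMap.zero_apply, ContinuousMap.sub_apply,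
          ContinuousMap.const_apply]
        rw [Set.mem_setOf_eq] at hy
        apply max_eq_right
        linarith
      have hTu : T u t = 0 := hvanish u hunn _ (isOpen_lt h.continuous continuous_const)
        (by rw [Set.mem_setOf_eq, hhx₀]; exact hε) huV
      have hle : h ≤ u + ε • (1 : C(K,ℝ)) := by
        rw [ContinuousMap.le_def]
        intro y
        rw [ContinuousMap.add_apply, hu, ContinuousMap.sup_apply, ContinuousMap.zero_apply,
          ContinuousMap.sub_apply, ContinuousMap.const_apply, ContinuousMap.smul_apply,
          ContinuousMap.one_apply, smul_eq_mul, mul_one]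
        rcases le_total (h y) ε with hc | hc
        · rw [max_eq_right (by linarith)]; linarith
        · rw [max_eq_left (by linarith)]; linarith
      have := ContinuousMap.le_def.mp (T_mono T hsup hle) t
      rw [map_add, ContinuousMap.add_apply, hTu, map_smul, ContinuousMap.smul_apply,
        smul_eq_mul, zero_add] at this
      exact this
    by_contra hne
    have hpos : 0 < T h t := lt_of_le_of_ne hnn (Ne.symm hne)
    have := hkey (T h t / (2 * (T 1) t)) (by positivity)
    rw [div_mul_eq_mul_div, mul_comm (2:ℝ) ((T 1) t), ← div_div,
      mul_div_assoc] at this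
    rw [div_self (ne_of_gt ht)] at this
    nlinarith
  -- Step (b3): conclusion
  refine ⟨x₀, fun f => ?_⟩
  set g : C(K, ℝ) := f - (f x₀) • 1 with hg
  have hgx₀ : g x₀ = 0 := by
    rw [hg, ContinuousMap.sub_apply, ContinuousMap.smul_apply, ContinuousMap.one_apply,
      smul_eq_mul, mul_one, sub_self]
  set a : C(K, ℝ) := g ⊔ (-g) with ha
  have hann : (0:C(K,ℝ)) ≤ a := by
    rw [ContinuousMap.le_def]
    intro y
    rw [ha, ContinuousMap.sup_apply, ContinuousMap.neg_apply, ContinuousMap.zero_apply]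
    rcases le_total 0 (g y) with hc | hc
    · exact le_trans hc le_sup_left
    · exact le_trans (by linarith : (0:ℝ) ≤ -(g y)) le_sup_right
  have hax₀ : a x₀ = 0 := by
    rw [ha, ContinuousMap.sup_apply, ContinuousMap.neg_apply, hgx₀, neg_zero, max_self]
  have hTa : T a t = 0 := hzero a hann hax₀
  have h1 : T g t ≤ T a t := ContinuousMap.le_def.mp (T_mono T hsup (le_sup_left : g ≤ a)) t
  have h2 : -(T g t) ≤ T a t := by
    have := ContinuousMap.le_def.mp (T_mono T hsup (le_sup_right : -g ≤ a)) t
    rwa [map_neg, ContinuousMap.neg_apply] at this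
  have hTg : T g t = 0 := by
    rw [hTa] at h1 h2
    linarith
  have : T f t = T g t + f x₀ * (T 1) t := by
    rw [hg, map_sub, map_smul, ContinuousMap.sub_apply, ContinuousMap.smul_apply, smul_eq_mul]
    ring
  rw [this, hTg, zero_add, mul_comm]

end Forward
end PeanoAux


/-- For a compact Hausdorff space `K`, `C(K)` is lattice embeddable into `C[0,1]` if
and only if `K` is a finite disjoint union of Peano compacta. -/
theorem CK_lattice_embeds_iff_finite_union_of_Peano
    (K : Type) [TopologicalSpace K] [CompactSpace K] [T2Space K] :
    (∃ T : C(K, ℝ) →L[ℝ] C(unitInterval, ℝ),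
      (∀ f g : C(K, ℝ), T (f ⊔ g) = T f ⊔ T g) ∧
      (∃ c : ℝ, 0 < c ∧ ∀ f : C(K, ℝ), c * ‖f‖ ≤ ‖T f‖)) ↔
    (∃ (n : ℕ) (A : Fin n → Set K),
      (Set.univ = ⋃ i, A i) ∧
      (∀ i j, i ≠ j → Disjoint (A i) (A j)) ∧
      (∀ i, IsPeanoSubset (A i))) := by
  classical
  constructor
  · rintro ⟨T, hsup, c, hc, hlow⟩
    -- trivial case: K empty
    by_cases hK : Nonempty K
    case neg =>
      refine ⟨0, (fun i => i.elim0), ?_, fun i => i.elim0, fun i => i.elim0⟩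
      rw [Set.iUnion_of_empty]
      rw [Set.univ_eq_empty_iff]
      exact ⟨fun x => hK ⟨x⟩⟩
    -- main case
    set w : C(unitInterval, ℝ) := T 1 with hw
    set U : Set unitInterval := {t | 0 < w t} with hU
    have hUopen : IsOpen U := isOpen_lt continuous_const w.continuous
    -- the point map
    have hψex : ∀ t : unitInterval, 0 < w t → ∃ x : K, ∀ f : C(K, ℝ), T f t = w t * f x :=
      fun t ht => PeanoAux.exists_pt T hsup t ht
    set ψ : unitInterval → K := fun t =>
      if ht : 0 < w t then (hψex t ht).choose else Classical.arbitrary K with hψ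
    have hψspec : ∀ t : unitInterval, 0 < w t → ∀ f : C(K, ℝ), T f t = w t * f (ψ t) := by
      intro t ht f
      rw [hψ]
      simp only [dif_pos ht]
      exact (hψex t ht).choose_spec f
    -- continuity of ψ on U
    have hψcont : ContinuousOn ψ U := by
      apply continuousOn_of_forall_continuousAt
      intro t₀ ht₀
      rw [hU, Set.mem_setOf_eq] at ht₀
      rw [continuousAt_def]
      intro V hV
      obtain ⟨W, hWV, hWopen, hψW⟩ := mem_nhds_iff.mp hV
      obtain ⟨v, hv0, hv1, hv01⟩ := exists_continuous_zero_one_of_isClosed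
        (isClosed_compl_iff.mpr hWopen) (isClosed_singleton (x := ψ t₀))
        (by rw [Set.disjoint_left]; intro y hy hy'; rw [Set.mem_singleton_iff] at hy';
            subst hy'; exact hy hψW)
      set O : Set unitInterval := {t | w t / 2 < (T v) t} ∩ U with hO
      have hOopen : IsOpen O := by
        apply IsOpen.inter _ hUopen
        exact isOpen_lt (w.continuous.div_const 2) (T v).continuous
      have ht₀O : t₀ ∈ O := by
        constructor
        · rw [Set.mem_setOf_eq, hψspec t₀ ht₀ v, hv1 rfl]
          rw [Pi.one_apply]
          linarith
        · exact ht₀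
      have hOsub : O ⊆ ψ ⁻¹' V := by
        rintro t ⟨ht1, ht2⟩
        rw [hU, Set.mem_setOf_eq] at ht2
        rw [Set.mem_setOf_eq, hψspec t ht2 v] at ht1
        have hvψ : 0 < v (ψ t) := by nlinarith
        have : ψ t ∈ W := by
          by_contra hmem
          rw [hv0 hmem] at hvψ
          norm_num at hvψ
        exact hWV this
      exact mem_nhds_iff.mpr ⟨O, hOsub, hOopen, ht₀O⟩
    -- closed subset where w is bounded below
    set F : Set unitInterval := {t | c / 2 ≤ w t} with hF
    have hFU : F ⊆ U := by
      intro t ht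
      rw [hF, Set.mem_setOf_eq] at ht
      rw [hU, Set.mem_setOf_eq]
      linarith
    have hFclosed : IsClosed F := isClosed_le continuous_const w.continuous
    have hFcompact : IsCompact F := hFclosed.isCompact
    have hEcompact : IsCompact (ψ '' F) := hFcompact.image_of_continuousOn (hψcont.mono hFU)
    -- surjectivity of ψ on F
    have hsurj : (Set.univ : Set K) ⊆ ψ '' F := by
      by_contra hcon
      obtain ⟨x, -, hx⟩ := Set.not_subset.mp hcon
      obtain ⟨f, hf0, hf1, hf01⟩ := exists_continuous_zero_one_of_isClosed
        hEcompact.isClosed (isClosed_singleton (x := x))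
        (by rw [Set.disjoint_left]; intro y hy hy'; rw [Set.mem_singleton_iff] at hy';
            subst hy'; exact hx hy)
      have hfx : f x = 1 := hf1 rfl
      have hnorm1 : 1 ≤ ‖f‖ := by
        have := ContinuousMap.norm_coe_le_norm f x
        rw [hfx] at this
        simpa using this
      have hbound : ‖T f‖ ≤ c / 2 := by
        rw [ContinuousMap.norm_le _ (by linarith : (0:ℝ) ≤ c/2)]
        intro t
        by_cases ht : 0 < w t
        · rw [hψspec t ht f]
          by_cases htF : c / 2 ≤ w t
          · have hmem : ψ t ∈ ψ '' F := ⟨t, htF, rfl⟩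
            have hfψ : f (ψ t) = 0 := hf0 hmem
            rw [hfψ, mul_zero]
            simp; linarith
          · push_neg at htF
            rw [Real.norm_eq_abs, abs_mul, abs_of_pos ht]
            have hfle : |f (ψ t)| ≤ 1 := by
              rw [abs_le]
              constructor
              · linarith [(hf01 (ψ t)).1]
              · exact (hf01 (ψ t)).2
            nlinarith
        · push_neg at ht
          have hwt : w t = 0 := le_antisymm ht (PeanoAux.w_nonneg T hsup t)
          have := PeanoAux.key_bound T hsup f t
          rw [← hw, hwt, mul_zero] at this
          rw [Real.norm_eq_abs]
          linarith
      have := hlow f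
      nlinarith
    -- cover F by closed intervals inside U
    have hball : ∀ τ : F, ∃ ε : ℝ, 0 < ε ∧ ∀ s : unitInterval, dist s (τ:unitInterval) < ε → s ∈ U := by
      intro τ
      obtain ⟨ε, hε, hεsub⟩ := Metric.isOpen_iff.mp hUopen τ (hFU τ.2)
      exact ⟨ε, hε, fun s hs => hεsub hs⟩
    choose ε hε1 hε2 using hball
    set a : F → unitInterval := fun τ =>
      Set.projIcc 0 1 zero_le_one ((τ:unitInterval).1 - ε τ / 2) with ha
    set b : F → unitInterval := fun τ =>
      Set.projIcc 0 1 zero_le_one ((τ:unitInterval).1 + ε τ / 2) with hb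
    have hab : ∀ τ, a τ ≤ b τ := by
      intro τ
      apply monotone_projIcc
      linarith [hε1 τ]
    have haval : ∀ τ, ((a τ):ℝ) = max 0 ((τ:unitInterval).1 - ε τ / 2) := by
      intro τ
      rw [ha]
      simp only [Set.coe_projIcc]
      rw [min_eq_right]
      linarith [(τ:unitInterval).2.2, hε1 τ]
    have hbval : ∀ τ, ((b τ):ℝ) = min 1 ((τ:unitInterval).1 + ε τ / 2) := by
      intro τ
      rw [hb]
      simp only [Set.coe_projIcc]
      rw [max_eq_right]
      apply le_min zero_le_one
      linarith [(τ:unitInterval).2.1, hε1 τ]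
    have hIccU : ∀ τ, Set.Icc (a τ) (b τ) ⊆ U := by
      intro τ s hs
      apply hε2 τ
      rw [Subtype.dist_eq, Real.dist_eq, abs_sub_lt_iff]
      have h1 : ((a τ):ℝ) ≤ s.1 := hs.1
      have h2 : s.1 ≤ ((b τ):ℝ) := hs.2
      rw [haval] at h1
      rw [hbval] at h2
      have h3 : (τ:unitInterval).1 - ε τ / 2 ≤ s.1 := le_trans (le_max_right _ _) h1
      have h4 : s.1 ≤ (τ:unitInterval).1 + ε τ / 2 := le_trans h2 (min_le_right _ _)
      constructor <;> [skip; skip] <;> linarith [hε1 τ]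
    have hballIcc : ∀ τ : F, Metric.ball (τ:unitInterval) (ε τ / 2) ⊆ Set.Icc (a τ) (b τ) := by
      intro τ s hs
      rw [Metric.mem_ball, Subtype.dist_eq, Real.dist_eq, abs_sub_lt_iff] at hs
      constructor
      · show (a τ) ≤ s
        rw [← Subtype.coe_le_coe, haval]
        apply max_le s.2.1
        linarith [hs.2]
      · show s ≤ (b τ)
        rw [← Subtype.coe_le_coe, hbval]
        apply le_min s.2.2
        linarith [hs.1]
    obtain ⟨sf, hsf⟩ := hFcompact.elim_finite_subcover
      (fun τ : F => Metric.ball (τ:unitInterval) (ε τ / 2))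
      (fun τ => Metric.isOpen_ball)
      (by
        intro t ht
        rw [Set.mem_iUnion]
        refine ⟨⟨t, ht⟩, ?_⟩
        rw [Metric.mem_ball, dist_self]
        exact half_pos (hε1 ⟨t, ht⟩))
    -- the Peano pieces
    set P : F → Set K := fun τ => ψ '' (Set.Icc (a τ) (b τ)) with hP
    have hPpeano : ∀ τ, IsPeanoSubset (P τ) := by
      intro τ
      refine ⟨ψ ∘ segMap (a τ) (b τ), ?_, ?_⟩
      · apply ContinuousOn.comp_continuous (hψcont.mono (hIccU τ)) (segMap_continuous _ _)
        intro u
        exact segMap_mem_Icc (hab τ) u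
      · rw [Set.range_comp, segMap_surj_Icc (hab τ)]
    have hPcover : (Set.univ : Set K) ⊆ ⋃ τ ∈ sf, P τ := by
      intro x hx
      obtain ⟨t, htF, rfl⟩ := hsurj hx
      obtain ⟨τ, hτ⟩ := Set.mem_iUnion₂.mp (hsf htF)
      rw [Set.mem_iUnion₂]
      exact ⟨τ, hτ.1, Set.mem_image_of_mem ψ (hballIcc τ hτ.2)⟩
    -- merge into disjoint Peano sets
    obtain ⟨tt, htt1, htt2, htt3⟩ := PeanoAux.merge (sf.image P)
      (by
        intro A hA
        obtain ⟨τ, _, rfl⟩ := Finset.mem_image.mp hA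
        exact hPpeano τ)
    have httuniv : ⋃₀ (tt : Set (Set K)) = Set.univ := by
      rw [htt2]
      apply Set.eq_univ_of_univ_subset
      intro x hx
      obtain ⟨τ, hτsf, hτP⟩ := Set.mem_iUnion₂.mp (hPcover hx)
      exact ⟨P τ, Finset.mem_coe.mpr (Finset.mem_image_of_mem P hτsf), hτP⟩
    refine ⟨tt.card, fun i => ((tt.equivFin.symm i : {B // B ∈ tt}) : Set K), ?_, ?_, ?_⟩
    · apply Set.eq_of_subset_of_subset _ (Set.subset_univ _)
      intro x _
      rw [Set.mem_iUnion]
      have hx : x ∈ ⋃₀ (tt : Set (Set K)) := by rw [httuniv]; trivial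
      obtain ⟨B, hB, hxB⟩ := hx
      exact ⟨tt.equivFin ⟨B, hB⟩, by rw [Equiv.symm_apply_apply]; exact hxB⟩
    · intro i j hij
      apply htt3
      · exact (tt.equivFin.symm i).2
      · exact (tt.equivFin.symm j).2
      · intro hcon
        exact hij (tt.equivFin.symm.injective (Subtype.ext hcon))
    · intro i
      exact htt1 _ (tt.equivFin.symm i).2
  · rintro ⟨n, A, hcov, -, hP⟩
    exact PeanoAux.backward_direction hcov hP
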